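/- Let N ≥ 2, let a_0, …, a_N and η_0, …, η_{N−1} be complex numbers (set η_N = 0), let x, y ∈ ℝ with z = x + iy, set p̂ = 2x, q̂ = −(x² + y²), and let δ_1, δ_2 ∈ ℂ. Define b̃_{N+1} = 0, b̃_N = a_N, b̃_n = (a_n + η_n) + p̂ b̃_{n+1} + q̂ b̃_{n+2} for n = N−1, …, 1, ũ = (a_0 + η_0) + x·b̃_1 + q̂·b̃_2, and w̃ = (ũ + i·y·b̃_1·(1 + δ_1))·(1 + δ_2). Let w(z) = Σ_{n=0}^N a_n z^n. Then w̃ − w(z) = δ_2·w(z) + (1 + δ_2)·Σ_{k=0}^{N} η_k z^k + i·y·b̃_1·δ_1·(1 + δ_2); consequently, if |δ_1|, |δ_2| ≤ ε then |w̃ − w(z)| ≤ ε·|w(z)| + (1 + ε)·Σ_{k=0}^{N} |η_k|·|z|^k + ε·(1 + ε)·|y|·|b̃_1|. -/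

import Mathlib

open Finset Complex

/-- Exact error decomposition for Goertzel's algorithm in floating point,
together with the resulting bound: with coefficient perturbations `η`
(`η N = 0`) and final rounding factors `δ₁, δ₂`, the computed value
`w̃ = (ũ + i y b̃₁ (1 + δ₁)) (1 + δ₂)` satisfies
`w̃ - w(z) = δ₂ w(z) + (1 + δ₂) ∑ η_k z^k + i y b̃₁ δ₁ (1 + δ₂)`, and if
`|δ₁|, |δ₂| ≤ ε` then
`|w̃ - w(z)| ≤ ε |w(z)| + (1 + ε) ∑ |η_k| |z|^k + ε (1 + ε) |y| |b̃₁|`. -/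
theorem goertzel_error_decomposition (N : ℕ) (hN : 2 ≤ N) (a η : ℕ → ℂ)
    (hηN : η N = 0) (x y : ℝ) (z : ℂ) (hz : z = (x : ℂ) + (y : ℂ) * I)
    (phat qhat : ℝ) (hp : phat = 2 * x) (hq : qhat = -(x ^ 2 + y ^ 2))
    (δ₁ δ₂ : ℂ)
    (bt : ℕ → ℂ) (hbtN1 : bt (N + 1) = 0) (hbtN : bt N = a N)
    (hbt : ∀ n, 1 ≤ n → n ≤ N - 1 →
      bt n = (a n + η n) + (phat : ℂ) * bt (n + 1) + (qhat : ℂ) * bt (n + 2))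
    (ut : ℂ) (hut : ut = (a 0 + η 0) + (x : ℂ) * bt 1 + (qhat : ℂ) * bt 2)
    (wt : ℂ) (hwt : wt = (ut + I * (y : ℂ) * bt 1 * (1 + δ₁)) * (1 + δ₂))
    (w : ℂ) (hw : w = ∑ n ∈ range (N + 1), a n * z ^ n) :
    wt - w = δ₂ * w + (1 + δ₂) * ∑ k ∈ range (N + 1), η k * z ^ k
        + I * (y : ℂ) * bt 1 * δ₁ * (1 + δ₂)
      ∧ ∀ ε : ℝ, ‖δ₁‖ ≤ ε → ‖δ₂‖ ≤ ε →
        ‖wt - w‖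
          ≤ ε * ‖w‖
            + (1 + ε) * ∑ k ∈ range (N + 1), ‖η k‖ * ‖z‖ ^ k
            + ε * (1 + ε) * |y| * ‖bt 1‖ := by
  set zb : ℂ := (x : ℂ) - (y : ℂ) * I with hzb
  have hzsum : z + zb = (phat : ℂ) := by rw [hz, hp, hzb]; push_cast; ring
  have hzprod : z * zb = -(qhat : ℂ) := by
    rw [hz, hq, hzb]; push_cast
    have : I * I = -1 := Complex.I_mul_I
    ring_nf
    rw [Complex.I_sq]; ring
  have key : ∀ j, j ≤ N - 1 →
      bt (N - j) - zb * bt (N - j + 1)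
        = ∑ k ∈ range (j + 1), (a (N - j + k) + η (N - j + k)) * z ^ k := by
    intro j
    induction j with
    | zero =>
      intro _
      simp [hbtN, hbtN1, hηN]
    | succ j ih =>
      intro hj
      have hj' : j ≤ N - 1 := by omega
      have h1 : 1 ≤ N - (j + 1) := by omega
      have h2 : N - (j + 1) ≤ N - 1 := by omega
      have e1 : N - (j + 1) + 1 = N - j := by omega
      have e2 : N - (j + 1) + 2 = N - j + 1 := by omega
      rw [hbt _ h1 h2, e1, e2, Finset.sum_range_succ']
      have e3 : ∀ k : ℕ, N - (j + 1) + (k + 1) = N - j + k := by omega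
      simp only [e3, add_zero, pow_zero, mul_one]
      have hsum : (∑ k ∈ range (j + 1), (a (N - j + k) + η (N - j + k)) * z ^ (k + 1))
          = z * ∑ k ∈ range (j + 1), (a (N - j + k) + η (N - j + k)) * z ^ k := by
        rw [Finset.mul_sum]; apply Finset.sum_congr rfl; intros; ring
      rw [hsum, ← ih hj']
      linear_combination (-(bt (N - j))) * hzsum + bt (N - j + 1) * hzprod
  have hkey1 := key (N - 1) le_rfl
  have e1 : N - (N - 1) = 1 := by omega
  have e2 : N - 1 + 1 = N := by omega
  rw [e1, e2] at hkey1
  -- hkey1 : bt 1 - zb * bt 2 = ∑ k ∈ range N, (a (1+k) + η (1+k)) * z ^ k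
  have hS : ut + I * (y : ℂ) * bt 1 = ∑ k ∈ range (N + 1), (a k + η k) * z ^ k := by
    rw [Finset.sum_range_succ']
    have hsum : (∑ k ∈ range N, (a (k + 1) + η (k + 1)) * z ^ (k + 1))
        = z * ∑ k ∈ range N, (a (1 + k) + η (1 + k)) * z ^ k := by
      rw [Finset.mul_sum]; apply Finset.sum_congr rfl; intros
      rw [add_comm 1]; ring
    rw [hsum, ← hkey1, hut]
    simp only [pow_zero, mul_one]
    linear_combination (-(bt 1)) * hz + bt 2 * hzprod
  have hsplit : (∑ k ∈ range (N + 1), (a k + η k) * z ^ k)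
      = w + ∑ k ∈ range (N + 1), η k * z ^ k := by
    rw [hw, ← Finset.sum_add_distrib]
    apply Finset.sum_congr rfl; intros; ring
  have hdec : wt - w = δ₂ * w + (1 + δ₂) * ∑ k ∈ range (N + 1), η k * z ^ k
      + I * (y : ℂ) * bt 1 * δ₁ * (1 + δ₂) := by
    rw [hwt]
    linear_combination (1 + δ₂) * hS + (1 + δ₂) * hsplit
  refine ⟨hdec, ?_⟩
  intro ε h1 h2
  have hε0 : 0 ≤ ε := (norm_nonneg δ₁).trans h1
  have habs2 : ‖1 + δ₂‖ ≤ 1 + ε := by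
    calc ‖1 + δ₂‖ ≤ ‖(1 : ℂ)‖ + ‖δ₂‖ := norm_add_le _ _
      _ ≤ 1 + ε := by simpa using h2
  have hEb : ‖∑ k ∈ range (N + 1), η k * z ^ k‖
      ≤ ∑ k ∈ range (N + 1), ‖η k‖ * ‖z‖ ^ k := by
    refine (norm_sum_le _ _).trans ?_
    apply le_of_eq
    apply Finset.sum_congr rfl; intros
    rw [norm_mul, norm_pow]
  rw [hdec]
  have tri : ‖δ₂ * w + (1 + δ₂) * ∑ k ∈ range (N + 1), η k * z ^ k
      + I * (y : ℂ) * bt 1 * δ₁ * (1 + δ₂)‖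
      ≤ ‖δ₂ * w‖ + ‖(1 + δ₂) * ∑ k ∈ range (N + 1), η k * z ^ k‖
      + ‖I * (y : ℂ) * bt 1 * δ₁ * (1 + δ₂)‖ :=
    (norm_add_le _ _).trans (add_le_add_left (norm_add_le _ _) _)
  refine tri.trans ?_
  have t1 : ‖δ₂ * w‖ ≤ ε * ‖w‖ := by
    rw [norm_mul]; gcongr
  have t2 : ‖(1 + δ₂) * ∑ k ∈ range (N + 1), η k * z ^ k‖
      ≤ (1 + ε) * ∑ k ∈ range (N + 1), ‖η k‖ * ‖z‖ ^ k := by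
    rw [norm_mul]
    exact mul_le_mul habs2 hEb (norm_nonneg _) (by positivity)
  have t3 : ‖I * (y : ℂ) * bt 1 * δ₁ * (1 + δ₂)‖
      ≤ ε * (1 + ε) * |y| * ‖bt 1‖ := by
    simp only [norm_mul, Complex.norm_I, Complex.norm_real, Real.norm_eq_abs, one_mul]
    calc |y| * ‖bt 1‖ * ‖δ₁‖ * ‖1 + δ₂‖
        ≤ |y| * ‖bt 1‖ * ε * (1 + ε) := by gcongr
      _ = ε * (1 + ε) * |y| * ‖bt 1‖ := by ring
  linarith
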